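/- If λ is an extreme point of the set of left-invariant means on a countable amenable group G, then for all φ, ψ ∈ ℓ∞(G) and every left-invariant mean η on G, one has ∫_G λ((g·φ)·ψ) dη(g) = λ(φ)·λ(ψ), where (g·φ)(t) = φ(g⁻¹t). -/

import Mathlib

open scoped Classical BoundedContinuousFunction

/-- Left translation `t ↦ g⁻¹ * t` as a continuous map (G discrete). -/
def lTransMap (G : Type*) [Group G] [TopologicalSpace G] [DiscreteTopology G] (g : G) :
    C(G, G) := ⟨fun t => g⁻¹ * t, continuous_of_discreteTopology⟩

/-- The left translation action on ℓ∞(G): `(g · φ)(t) = φ(g⁻¹ t)`. -/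
noncomputable def lTrans (G : Type*) [Group G] [TopologicalSpace G] [DiscreteTopology G]
    (g : G) (f : G →ᵇ ℝ) : G →ᵇ ℝ := f.compContinuous (lTransMap G g)

/-- A mean on G: a positive unital linear functional on ℓ∞(G). -/
def IsMean (G : Type*) [Group G] [TopologicalSpace G] [DiscreteTopology G]
    (m : (G →ᵇ ℝ) →ₗ[ℝ] ℝ) : Prop :=
  m 1 = 1 ∧ ∀ f : G →ᵇ ℝ, 0 ≤ f → 0 ≤ m f

/-- A left-invariant mean on G. -/
def IsLeftInvariantMean (G : Type*) [Group G] [TopologicalSpace G] [DiscreteTopology G]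
    (m : (G →ᵇ ℝ) →ₗ[ℝ] ℝ) : Prop :=
  IsMean G m ∧ ∀ (g : G) (f : G →ᵇ ℝ), m (lTrans G g f) = m f

section Aux

set_option linter.unusedSectionVars false

variable {G : Type*} [Group G] [TopologicalSpace G] [DiscreteTopology G]

lemma bcf_le_iff {f h : G →ᵇ ℝ} : f ≤ h ↔ ∀ x, f x ≤ h x := Iff.rfl

lemma lTrans_apply (g : G) (f : G →ᵇ ℝ) (t : G) : lTrans G g f t = f (g⁻¹ * t) := rfl

lemma lTrans_add (g : G) (f h : G →ᵇ ℝ) :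
    lTrans G g (f + h) = lTrans G g f + lTrans G g h := by
  ext t; simp [lTrans_apply]

lemma lTrans_smul (g : G) (c : ℝ) (f : G →ᵇ ℝ) :
    lTrans G g (c • f) = c • lTrans G g f := by
  ext t; simp [lTrans_apply]

lemma lTrans_mul (g : G) (f h : G →ᵇ ℝ) :
    lTrans G g (f * h) = lTrans G g f * lTrans G g h := by
  ext t; simp [lTrans_apply]

lemma lTrans_one (g : G) : lTrans G g (1 : G →ᵇ ℝ) = 1 := by
  ext t; simp [lTrans_apply]

lemma lTrans_lTrans (g h : G) (f : G →ᵇ ℝ) :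
    lTrans G g (lTrans G h f) = lTrans G (g * h) f := by
  ext t; simp [lTrans_apply, mul_assoc]

lemma lTrans_nonneg (g : G) {f : G →ᵇ ℝ} (hf : 0 ≤ f) : 0 ≤ lTrans G g f := by
  rw [bcf_le_iff] at hf ⊢
  intro t; simpa [lTrans_apply] using hf (g⁻¹ * t)

lemma mean_le_norm {m : (G →ᵇ ℝ) →ₗ[ℝ] ℝ} (hm : IsMean G m) (f : G →ᵇ ℝ) :
    |m f| ≤ ‖f‖ := by
  have h1 : 0 ≤ m (‖f‖ • 1 - f) := by
    apply hm.2
    rw [bcf_le_iff]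
    intro x
    have := BoundedContinuousFunction.norm_coe_le_norm f x
    have := abs_le.mp (by simpa using this)
    simp only [BoundedContinuousFunction.coe_zero, Pi.zero_apply,
      BoundedContinuousFunction.coe_sub, BoundedContinuousFunction.coe_smul,
      BoundedContinuousFunction.coe_one, Pi.sub_apply, Pi.smul_apply, Pi.one_apply,
      smul_eq_mul, mul_one]
    linarith [this.2]
  have h2 : 0 ≤ m (‖f‖ • 1 + f) := by
    apply hm.2
    rw [bcf_le_iff]
    intro x
    have := BoundedContinuousFunction.norm_coe_le_norm f x
    have := abs_le.mp (by simpa using this)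
    simp only [BoundedContinuousFunction.coe_zero, Pi.zero_apply,
      BoundedContinuousFunction.coe_add, BoundedContinuousFunction.coe_smul,
      BoundedContinuousFunction.coe_one, Pi.add_apply, Pi.smul_apply, Pi.one_apply,
      smul_eq_mul, mul_one]
    linarith [this.1]
  rw [map_sub, map_smul, hm.1] at h1
  rw [map_add, map_smul, hm.1] at h2
  simp only [smul_eq_mul, mul_one] at h1 h2
  rw [abs_le]; constructor <;> linarith

/-- The bounded function `g ↦ lam((g·φ)·ψ)`. -/
noncomputable def Fb (lam : (G →ᵇ ℝ) →ₗ[ℝ] ℝ) (hl : IsMean G lam) (φ ψ : G →ᵇ ℝ) : G →ᵇ ℝ :=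
  BoundedContinuousFunction.ofNormedAddCommGroup (fun g => lam (lTrans G g φ * ψ))
    continuous_of_discreteTopology (‖φ‖ * ‖ψ‖) (by
      intro g
      calc ‖lam (lTrans G g φ * ψ)‖ ≤ ‖lTrans G g φ * ψ‖ := mean_le_norm hl _
        _ ≤ ‖lTrans G g φ‖ * ‖ψ‖ := norm_mul_le _ _
        _ ≤ ‖φ‖ * ‖ψ‖ := by
            gcongr
            exact BoundedContinuousFunction.norm_compContinuous_le _ _)

lemma Fb_apply (lam : (G →ᵇ ℝ) →ₗ[ℝ] ℝ) (hl : IsMean G lam) (φ ψ : G →ᵇ ℝ) (g : G) :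
    Fb lam hl φ ψ g = lam (lTrans G g φ * ψ) := rfl

/-- The functional `ψ ↦ η (g ↦ lam((g·φ)ψ))`. -/
noncomputable def nu (lam eta : (G →ᵇ ℝ) →ₗ[ℝ] ℝ) (hl : IsMean G lam) (φ : G →ᵇ ℝ) :
    (G →ᵇ ℝ) →ₗ[ℝ] ℝ where
  toFun ψ := eta (Fb lam hl φ ψ)
  map_add' ψ₁ ψ₂ := by
    have h : Fb lam hl φ (ψ₁ + ψ₂) = Fb lam hl φ ψ₁ + Fb lam hl φ ψ₂ := by
      ext g; simp [Fb_apply, mul_add, map_add]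
    show eta (Fb lam hl φ (ψ₁ + ψ₂)) = eta (Fb lam hl φ ψ₁) + eta (Fb lam hl φ ψ₂)
    rw [h, map_add]
  map_smul' c ψ := by
    have h : Fb lam hl φ (c • ψ) = c • Fb lam hl φ ψ := by
      ext g; simp [Fb_apply, mul_smul_comm, map_smul]
    show eta (Fb lam hl φ (c • ψ)) = (RingHom.id ℝ) c • eta (Fb lam hl φ ψ)
    rw [h, map_smul, RingHom.id_apply]

lemma nu_apply (lam eta : (G →ᵇ ℝ) →ₗ[ℝ] ℝ) (hl : IsMean G lam) (φ ψ : G →ᵇ ℝ) :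
    nu lam eta hl φ ψ = eta (Fb lam hl φ ψ) := rfl

variable {lam eta : (G →ᵇ ℝ) →ₗ[ℝ] ℝ}

lemma nu_one (hl : IsLeftInvariantMean G lam) (he : IsLeftInvariantMean G eta) (φ : G →ᵇ ℝ) :
    nu lam eta hl.1 φ 1 = lam φ := by
  have : Fb lam hl.1 φ 1 = lam φ • 1 := by
    ext g
    simp [Fb_apply, hl.2 g φ]
  rw [nu_apply, this, map_smul, he.1.1, smul_eq_mul, mul_one]

lemma nu_nonneg (hl : IsMean G lam) (he : IsLeftInvariantMean G eta)
    {φ ψ : G →ᵇ ℝ} (hφ : 0 ≤ φ) (hψ : 0 ≤ ψ) : 0 ≤ nu lam eta hl φ ψ := by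
  apply he.1.2
  rw [bcf_le_iff]
  intro g
  simp only [BoundedContinuousFunction.coe_zero, Pi.zero_apply, Fb_apply]
  apply hl.2
  rw [bcf_le_iff]
  intro t
  have h1 := (bcf_le_iff.mp (lTrans_nonneg g hφ)) t
  have h2 := (bcf_le_iff.mp hψ) t
  simp only [BoundedContinuousFunction.coe_zero, Pi.zero_apply] at h1 h2 ⊢
  simpa using mul_nonneg h1 h2

lemma nu_invariant (hl : IsLeftInvariantMean G lam) (he : IsLeftInvariantMean G eta)
    (φ : G →ᵇ ℝ) (h : G) (ψ : G →ᵇ ℝ) :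
    nu lam eta hl.1 φ (lTrans G h ψ) = nu lam eta hl.1 φ ψ := by
  have key : Fb lam hl.1 φ (lTrans G h ψ) = lTrans G h (Fb lam hl.1 φ ψ) := by
    ext g
    rw [lTrans_apply, Fb_apply, Fb_apply]
    rw [← hl.2 h⁻¹ (lTrans G g φ * lTrans G h ψ)]
    rw [lTrans_mul, lTrans_lTrans, lTrans_lTrans, inv_mul_cancel, ]
    congr 1
    ext t
    simp [lTrans_apply]
  rw [nu_apply, key, he.2, nu_apply]

lemma nu_add_compl (hl : IsLeftInvariantMean G lam) (he : IsLeftInvariantMean G eta)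
    (φ ψ : G →ᵇ ℝ) :
    nu lam eta hl.1 φ ψ + nu lam eta hl.1 (1 - φ) ψ = lam ψ := by
  have : Fb lam hl.1 φ ψ + Fb lam hl.1 (1 - φ) ψ = lam ψ • 1 := by
    ext g
    have h1 : lTrans G g φ * ψ + lTrans G g (1 - φ) * ψ = ψ := by
      have : lTrans G g (1 - φ) = 1 - lTrans G g φ := by
        ext t; simp [lTrans_apply]
      rw [this]; ring
    simp only [BoundedContinuousFunction.coe_add, Pi.add_apply, Fb_apply,
      BoundedContinuousFunction.coe_smul, BoundedContinuousFunction.coe_one,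
      Pi.smul_apply, Pi.one_apply, smul_eq_mul, mul_one]
    rw [← map_add lam, h1]
  rw [nu_apply, nu_apply, ← map_add eta, this, map_smul, he.1.1, smul_eq_mul, mul_one]

lemma nu_zero_of (hl : IsLeftInvariantMean G lam) (he : IsLeftInvariantMean G eta)
    {φ : G →ᵇ ℝ} (hφ : 0 ≤ φ) (h0 : nu lam eta hl.1 φ 1 = 0) (ψ : G →ᵇ ℝ) :
    nu lam eta hl.1 φ ψ = 0 := by
  have hA : 0 ≤ nu lam eta hl.1 φ (‖ψ‖ • 1 - ψ) := by
    apply nu_nonneg hl.1 he hφ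
    rw [bcf_le_iff]; intro x
    have := abs_le.mp (by simpa using BoundedContinuousFunction.norm_coe_le_norm ψ x)
    simp only [BoundedContinuousFunction.coe_zero, Pi.zero_apply,
      BoundedContinuousFunction.coe_sub, BoundedContinuousFunction.coe_smul,
      BoundedContinuousFunction.coe_one, Pi.sub_apply, Pi.smul_apply, Pi.one_apply,
      smul_eq_mul, mul_one]
    linarith [this.2]
  have hB : 0 ≤ nu lam eta hl.1 φ (‖ψ‖ • 1 + ψ) := by
    apply nu_nonneg hl.1 he hφ
    rw [bcf_le_iff]; intro x
    have := abs_le.mp (by simpa using BoundedContinuousFunction.norm_coe_le_norm ψ x)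
    simp only [BoundedContinuousFunction.coe_zero, Pi.zero_apply,
      BoundedContinuousFunction.coe_add, BoundedContinuousFunction.coe_smul,
      BoundedContinuousFunction.coe_one, Pi.add_apply, Pi.smul_apply, Pi.one_apply,
      smul_eq_mul, mul_one]
    linarith [this.1]
  rw [map_sub, map_smul, h0] at hA
  rw [map_add, map_smul, h0] at hB
  simp only [smul_eq_mul, mul_zero] at hA hB
  linarith

/-- Key lemma for `0 ≤ φ ≤ 1`. -/
lemma key_lemma
    (hlam : lam ∈ Set.extremePoints ℝ {m : (G →ᵇ ℝ) →ₗ[ℝ] ℝ | IsLeftInvariantMean G m})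
    (he : IsLeftInvariantMean G eta)
    {φ : G →ᵇ ℝ} (h0 : 0 ≤ φ) (h1 : φ ≤ 1) (ψ : G →ᵇ ℝ) :
    nu lam eta hlam.1.1 φ ψ = lam φ * lam ψ := by
  have hl : IsLeftInvariantMean G lam := hlam.1
  set t := lam φ with ht
  have ht0 : 0 ≤ t := hl.1.2 φ h0
  have ht1 : t ≤ 1 := by
    have h := hl.1.2 (1 - φ) (by rwa [sub_nonneg])
    rw [map_sub, hl.1.1] at h
    linarith
  rcases eq_or_lt_of_le ht0 with h | htpos
  · -- t = 0
    rw [nu_zero_of hl he h0 (by rw [nu_one hl he]; exact h.symm) ψ, ← h, zero_mul]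
  rcases eq_or_lt_of_le ht1 with h | htlt
  · -- t = 1
    have hc0 : lam (1 - φ) = 0 := by rw [map_sub, hl.1.1, ← ht, h, sub_self]
    have hcompl : nu lam eta hl.1 (1 - φ) ψ = 0 :=
      nu_zero_of hl he (by rwa [sub_nonneg]) (by rw [nu_one hl he]; exact hc0) ψ
    have := nu_add_compl hl he φ ψ
    rw [hcompl, add_zero] at this
    rw [this, h, one_mul]
  -- 0 < t < 1
  set m₁ : (G →ᵇ ℝ) →ₗ[ℝ] ℝ := t⁻¹ • nu lam eta hl.1 φ with hm₁
  set m₂ : (G →ᵇ ℝ) →ₗ[ℝ] ℝ := (1 - t)⁻¹ • nu lam eta hl.1 (1 - φ) with hm₂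
  have htne : t ≠ 0 := ne_of_gt htpos
  have h1tne : (1 - t) ≠ 0 := by intro h; apply absurd htlt; rw [show t = 1 by linarith]; simp
  have hm₁mem : IsLeftInvariantMean G m₁ := by
    refine ⟨⟨?_, ?_⟩, ?_⟩
    · simp only [hm₁, LinearMap.smul_apply, smul_eq_mul]
      rw [nu_one hl he, ← ht, inv_mul_cancel₀ htne]
    · intro f hf
      simp only [hm₁, LinearMap.smul_apply, smul_eq_mul]
      exact mul_nonneg (by positivity) (nu_nonneg hl.1 he h0 hf)
    · intro g f
      simp only [hm₁, LinearMap.smul_apply, smul_eq_mul]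
      rw [nu_invariant hl he φ g f]
  have hm₂mem : IsLeftInvariantMean G m₂ := by
    have hc0 : lam (1 - φ) = 1 - t := by rw [map_sub, hl.1.1, ← ht]
    refine ⟨⟨?_, ?_⟩, ?_⟩
    · simp only [hm₂, LinearMap.smul_apply, smul_eq_mul]
      rw [nu_one hl he, hc0, inv_mul_cancel₀ h1tne]
    · intro f hf
      simp only [hm₂, LinearMap.smul_apply, smul_eq_mul]
      have : (0:ℝ) ≤ (1 - t)⁻¹ := by
        apply inv_nonneg.mpr; linarith
      exact mul_nonneg this (nu_nonneg hl.1 he (by rwa [sub_nonneg]) hf)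
    · intro g f
      simp only [hm₂, LinearMap.smul_apply, smul_eq_mul]
      rw [nu_invariant hl he (1-φ) g f]
  have hseg : lam ∈ openSegment ℝ m₁ m₂ := by
    refine ⟨t, 1 - t, htpos, by linarith, by ring, ?_⟩
    ext ψ'
    simp only [LinearMap.add_apply, LinearMap.smul_apply, hm₁, hm₂, smul_eq_mul]
    rw [← mul_assoc, ← mul_assoc, mul_inv_cancel₀ htne, mul_inv_cancel₀ h1tne,
      one_mul, one_mul]
    exact nu_add_compl hl he φ ψ'
  have := hlam.2 (show m₁ ∈ _ from hm₁mem) (show m₂ ∈ _ from hm₂mem) hseg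
  have hm1eq : m₁ = lam := this
  have : m₁ ψ = lam ψ := by rw [hm1eq]
  simp only [hm₁, LinearMap.smul_apply, smul_eq_mul] at this
  have : nu lam eta hl.1 φ ψ = t * lam ψ := by
    field_simp at this
    linarith [this]
  rw [this, ht]

end Aux

/-- **Weak Ergodic Theorem.** -/
theorem weak_ergodic_theorem {G : Type*} [Group G] [Countable G]
    [TopologicalSpace G] [DiscreteTopology G]
    (lam : (G →ᵇ ℝ) →ₗ[ℝ] ℝ)
    (hlam : lam ∈ Set.extremePoints ℝ {m : (G →ᵇ ℝ) →ₗ[ℝ] ℝ | IsLeftInvariantMean G m})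
    (eta : (G →ᵇ ℝ) →ₗ[ℝ] ℝ) (heta : IsLeftInvariantMean G eta)
    (φ ψ : G →ᵇ ℝ) (F : G →ᵇ ℝ)
    (hF : ∀ g : G, F g = lam (lTrans G g φ * ψ)) :
    eta F = lam φ * lam ψ := by
  have hl : IsLeftInvariantMean G lam := hlam.1
  have hFeq : F = Fb lam hl.1 φ ψ := by
    ext g; rw [hF g, Fb_apply]
  rw [hFeq, ← nu_apply]
  -- decompose φ: φ = (2D) • φ' - D • 1 with D = ‖φ‖ + 1, φ' = (2D)⁻¹ • (φ + D • 1)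
  set D : ℝ := ‖φ‖ + 1 with hD
  have hDpos : 0 < D := by positivity
  set φ' : G →ᵇ ℝ := (2 * D)⁻¹ • (φ + D • 1) with hφ'
  have hφ'0 : 0 ≤ φ' := by
    rw [bcf_le_iff]; intro x
    have := abs_le.mp (by simpa using BoundedContinuousFunction.norm_coe_le_norm φ x)
    simp only [hφ', BoundedContinuousFunction.coe_zero, Pi.zero_apply,
      BoundedContinuousFunction.coe_smul, BoundedContinuousFunction.coe_add,
      BoundedContinuousFunction.coe_one, Pi.smul_apply, Pi.add_apply, Pi.one_apply,
      smul_eq_mul, mul_one]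
    have h2D : (0:ℝ) < (2*D)⁻¹ := by positivity
    nlinarith [this.1]
  have hφ'1 : φ' ≤ 1 := by
    rw [bcf_le_iff]; intro x
    have := abs_le.mp (by simpa using BoundedContinuousFunction.norm_coe_le_norm φ x)
    simp only [hφ', BoundedContinuousFunction.coe_smul, BoundedContinuousFunction.coe_add,
      BoundedContinuousFunction.coe_one, Pi.smul_apply, Pi.add_apply, Pi.one_apply,
      smul_eq_mul, mul_one]
    rw [inv_mul_le_iff₀ (by positivity)]
    nlinarith [this.2]
  have hrec : φ = (2 * D) • φ' - D • 1 := by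
    rw [hφ', smul_smul, mul_inv_cancel₀ (by positivity : (2*D) ≠ 0), one_smul]
    abel
  have hkey₁ := key_lemma hlam heta hφ'0 hφ'1 ψ
  have hkey₂ := key_lemma hlam heta (show (0:G →ᵇ ℝ) ≤ 1 by rw [bcf_le_iff]; intro x; simp) (le_refl 1) ψ
  -- linearity of nu in first argument
  have hFb : Fb lam hl.1 φ ψ = (2 * D) • Fb lam hl.1 φ' ψ - D • Fb lam hl.1 1 ψ := by
    ext g
    simp only [BoundedContinuousFunction.coe_sub, BoundedContinuousFunction.coe_smul,
      Pi.sub_apply, Pi.smul_apply, Fb_apply, smul_eq_mul]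
    rw [show 2 * D * lam (lTrans G g φ' * ψ) = (2*D) • lam (lTrans G g φ' * ψ) from rfl,
      show D * lam (lTrans G g 1 * ψ) = D • lam (lTrans G g 1 * ψ) from rfl,
      ← map_smul lam, ← map_smul lam, ← map_sub lam]
    congr 1
    rw [hrec]
    ext t
    simp only [BoundedContinuousFunction.coe_mul, BoundedContinuousFunction.coe_sub,
      BoundedContinuousFunction.coe_smul, Pi.mul_apply, Pi.sub_apply, Pi.smul_apply,
      BoundedContinuousFunction.coe_one, Pi.one_apply, smul_eq_mul, lTrans_apply]
    ring
  rw [nu_apply, hFb, map_sub, map_smul, map_smul, ← nu_apply, ← nu_apply, hkey₁, hkey₂]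
  have hlam1 : lam (1 : G →ᵇ ℝ) = 1 := hl.1.1
  have hlamφ' : lam φ' = (2 * D)⁻¹ * (lam φ + D) := by
    rw [hφ', map_smul, map_add, map_smul, hlam1, smul_eq_mul, smul_eq_mul, mul_one]
  rw [hlamφ', hlam1, smul_eq_mul, smul_eq_mul]
  field_simp
  ring
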